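/- Let n ≥ 2 and m ≥ 2 be integers, let f ∈ R_m = ℤ[x_1, ..., x_m], and let 1 ≤ i < j ≤ m. Then the integer c_{f^{2^n}}(x_i x_j)/2^n satisfies the congruence c_{f^{2^n}}(x_i x_j)/2^n ≡ c_f(1) · (c_f(x_i x_j) + c_f(x_i) · c_f(x_j)) (mod 2). -/

import Mathlib

set_option synthInstance.maxHeartbeats 1000000
set_option maxHeartbeats 1000000

private def mk4 (a b c d : ℤ) : DualNumber (DualNumber ℤ) := ⟨⟨a, b⟩, ⟨c, d⟩⟩

private lemma mk4_mul (a b c d a' b' c' d' : ℤ) :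
    mk4 a b c d * mk4 a' b' c' d' =
      mk4 (a*a') (a*b' + b*a') (a*c' + c*a') (a*d' + b*c' + (c*b' + d*a')) := rfl

private lemma mk4_add (a b c d a' b' c' d' : ℤ) :
    mk4 a b c d + mk4 a' b' c' d' = mk4 (a+a') (b+b') (c+c') (d+d') := rfl

private lemma mk4_congr {a b c d a' b' c' d' : ℤ} (ha : a = a') (hb : b = b')
    (hc : c = c') (hd : d = d') : mk4 a b c d = mk4 a' b' c' d' := by
  subst ha hb hc hd; rfl

private lemma mk4_inj {a b c d a' b' c' d' : ℤ} (h : mk4 a b c d = mk4 a' b' c' d') :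
    a = a' ∧ b = b' ∧ c = c' ∧ d = d' := by
  unfold mk4 at h
  change (((a, b), (c, d)) : (ℤ × ℤ) × (ℤ × ℤ)) = ((a', b'), (c', d')) at h
  rw [Prod.mk.injEq, Prod.mk.injEq, Prod.mk.injEq] at h
  tauto

private lemma mk4_pow (a b c d : ℤ) (K : ℕ) :
    (mk4 a b c d) ^ (K + 2) =
      mk4 (a ^ (K + 2)) ((K + 2) * a ^ (K + 1) * b) ((K + 2) * a ^ (K + 1) * c)
        ((K + 2) * a ^ (K + 1) * d + (K + 2) * (K + 1) * a ^ K * b * c) := by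
  induction K with
  | zero =>
    rw [pow_two, mk4_mul]
    exact mk4_congr (by ring) (by push_cast; ring) (by push_cast; ring) (by push_cast; ring)
  | succ K ih =>
    rw [pow_succ, ih, mk4_mul]
    exact mk4_congr (by ring) (by push_cast; ring) (by push_cast; ring) (by push_cast; ring)

open MvPolynomial in
private lemma phi_eq {m : ℕ} (i j : Fin m) (hij : i ≠ j) (f : MvPolynomial (Fin m) ℤ) :
    aeval (fun k => if k = i then mk4 0 1 0 0 else if k = j then mk4 0 0 1 0 else 0) f =
      mk4 (coeff 0 f) (coeff (Finsupp.single i 1) f) (coeff (Finsupp.single j 1) f)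
        (coeff (Finsupp.single i 1 + Finsupp.single j 1) f) := by
  have hsi : (Finsupp.single i 1 : Fin m →₀ ℕ) ≠ 0 := by
    simp [Finsupp.single_eq_zero]
  have hsj : (Finsupp.single j 1 : Fin m →₀ ℕ) ≠ 0 := by
    simp [Finsupp.single_eq_zero]
  have hsij : (Finsupp.single i 1 + Finsupp.single j 1 : Fin m →₀ ℕ) ≠ 0 := by
    intro h
    have := DFunLike.congr_fun h i
    simp [Finsupp.single_apply, hij] at this
  have memsi : ∀ k' : Fin m, k' ∈ (Finsupp.single i 1 : Fin m →₀ ℕ).support ↔ k' = i := by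
    intro k'
    rw [Finsupp.mem_support_iff]
    constructor
    · intro h; by_contra hc; exact h (Finsupp.single_eq_of_ne' (Ne.symm hc))
    · rintro rfl; simp
  have memsj : ∀ k' : Fin m, k' ∈ (Finsupp.single j 1 : Fin m →₀ ℕ).support ↔ k' = j := by
    intro k'
    rw [Finsupp.mem_support_iff]
    constructor
    · intro h; by_contra hc; exact h (Finsupp.single_eq_of_ne' (Ne.symm hc))
    · rintro rfl; simp
  have memsij : ∀ k' : Fin m,
      k' ∈ (Finsupp.single i 1 + Finsupp.single j 1 : Fin m →₀ ℕ).support ↔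
        (k' = i ∨ k' = j) := by
    intro k'
    rw [Finsupp.mem_support_iff, Finsupp.add_apply]
    constructor
    · intro h
      by_contra hc
      push_neg at hc
      rw [Finsupp.single_eq_of_ne' (Ne.symm hc.1), Finsupp.single_eq_of_ne' (Ne.symm hc.2)] at h
      exact h rfl
    · rintro (rfl | rfl) <;> simp [Finsupp.single_eq_same]
  induction f using MvPolynomial.induction_on with
  | C a =>
    rw [aeval_C,
      show algebraMap ℤ (DualNumber (DualNumber ℤ)) a = mk4 a 0 0 0 from rfl]
    exact (mk4_congr (by rw [coeff_C]; simp) (by rw [coeff_C, if_neg (fun h => hsi h.symm)])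
      (by rw [coeff_C, if_neg (fun h => hsj h.symm)]) (by rw [coeff_C, if_neg (fun h => hsij h.symm)])).symm
  | add p q hp hq =>
    rw [map_add, hp, hq, mk4_add]
    exact mk4_congr (by simp) (by simp) (by simp) (by simp)
  | mul_X p k hp =>
    rw [map_mul, hp, aeval_X]
    rcases eq_or_ne k i with rfl | hki
    · rw [if_pos rfl, mk4_mul]
      refine mk4_congr ?_ ?_ ?_ ?_
      · rw [coeff_mul_X']; simp
      · rw [coeff_mul_X', if_pos ((memsi k).2 rfl), tsub_self]; ring
      · rw [coeff_mul_X', if_neg (fun hmem => hij ((memsj k).1 hmem))]; ring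
      · rw [coeff_mul_X', if_pos ((memsij k).2 (Or.inl rfl)), add_tsub_cancel_left]; ring
    · rcases eq_or_ne k j with rfl | hkj
      · rw [if_neg hki, if_pos rfl, mk4_mul]
        refine mk4_congr ?_ ?_ ?_ ?_
        · rw [coeff_mul_X']; simp
        · rw [coeff_mul_X', if_neg (fun hmem => hki ((memsi k).1 hmem))]; ring
        · rw [coeff_mul_X', if_pos ((memsj k).2 rfl), tsub_self]; ring
        · rw [coeff_mul_X', if_pos ((memsij k).2 (Or.inr rfl)),
            add_comm (Finsupp.single i 1), add_tsub_cancel_left]; ring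
      · rw [if_neg hki, if_neg hkj, mul_zero,
          show (0 : DualNumber (DualNumber ℤ)) = mk4 0 0 0 0 from rfl]
        refine mk4_congr ?_ ?_ ?_ ?_
        · rw [coeff_mul_X']; simp
        · rw [coeff_mul_X', if_neg (fun hmem => hki ((memsi k).1 hmem))]
        · rw [coeff_mul_X', if_neg (fun hmem => hkj ((memsj k).1 hmem))]
        · rw [coeff_mul_X', if_neg (fun hmem => ?_)]
          rcases (memsij k).1 hmem with h | h
          exacts [hki h, hkj h]

private lemma zmod2_pow_self (x : ZMod 2) (k : ℕ) (hk : 1 ≤ k) : x ^ k = x := by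
  obtain ⟨k, rfl⟩ := Nat.exists_eq_add_of_le hk
  induction k with
  | zero => simp
  | succ k ih =>
    rw [show 1 + (k + 1) = (1 + k) + 1 from by ring, pow_succ, ih (by omega)]
    have h2 : ∀ y : ZMod 2, y * y = y := by decide
    exact h2 x

/-- The integer `c_{f^{2^n}}(x_i x_j)/2^n` is congruent to
`c_f(1)·(c_f(x_i x_j) + c_f(x_i)·c_f(x_j))` modulo `2`. -/
theorem stmt_6 (n m : ℕ) (hn : 2 ≤ n) (hm : 2 ≤ m)
    (f : MvPolynomial (Fin m) ℤ) (i j : Fin m) (hij : i < j) :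
    (2 : ℤ) ^ n ∣ MvPolynomial.coeff (Finsupp.single i 1 + Finsupp.single j 1) (f ^ 2 ^ n) ∧
    MvPolynomial.coeff (Finsupp.single i 1 + Finsupp.single j 1) (f ^ 2 ^ n) / 2 ^ n ≡
      MvPolynomial.coeff 0 f *
        (MvPolynomial.coeff (Finsupp.single i 1 + Finsupp.single j 1) f +
          MvPolynomial.coeff (Finsupp.single i 1) f *
            MvPolynomial.coeff (Finsupp.single j 1) f) [ZMOD 2] := by
  have hne : i ≠ j := ne_of_lt hij
  set a := MvPolynomial.coeff 0 f with ha
  set b := MvPolynomial.coeff (Finsupp.single i 1) f with hb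
  set c := MvPolynomial.coeff (Finsupp.single j 1) f with hc
  set d := MvPolynomial.coeff (Finsupp.single i 1 + Finsupp.single j 1) f with hd
  have h4 : 4 ≤ 2 ^ n := by
    calc (4 : ℕ) = 2 ^ 2 := rfl
    _ ≤ 2 ^ n := Nat.pow_le_pow_right (by norm_num) hn
  obtain ⟨K, hK⟩ : ∃ K, 2 ^ n = K + 2 := ⟨2 ^ n - 2, by omega⟩
  have key := phi_eq i j hne (f ^ 2 ^ n)
  rw [map_pow, phi_eq i j hne f, ← ha, ← hb, ← hc, ← hd, hK, mk4_pow] at key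
  obtain ⟨-, -, -, hDD⟩ := mk4_inj key.symm
  rw [hK]
  have h2K : ((K : ℤ) + 2) = 2 ^ n := by
    have := congrArg (fun t : ℕ => (t : ℤ)) hK
    push_cast at this
    omega
  have hcoeff : MvPolynomial.coeff (Finsupp.single i 1 + Finsupp.single j 1) (f ^ (K + 2)) =
      2 ^ n * (a ^ (K + 1) * d + (K + 1) * a ^ K * b * c) := by
    rw [hDD, ← h2K]; push_cast; ring
  constructor
  · exact ⟨_, hcoeff⟩
  · rw [hcoeff, Int.mul_ediv_cancel_left _ (by positivity)]
    have : ((a ^ (K + 1) * d + (K + 1) * a ^ K * b * c : ℤ) : ZMod 2) =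
        ((a * (d + b * c) : ℤ) : ZMod 2) := by
      push_cast
      have hK2 : ((K : ZMod 2)) = 0 := by
        have := congrArg (fun t : ℕ => (t : ZMod 2)) hK
        push_cast at this
        have h2n : ((2 : ZMod 2)) ^ n = 0 := by
          rw [show (2 : ZMod 2) = 0 from rfl, zero_pow (by omega)]
        rw [h2n] at this
        have : (K : ZMod 2) + 2 = 0 := this.symm
        rwa [show (2 : ZMod 2) = 0 from rfl, add_zero] at this
      rw [hK2]
      have hKpos : 1 ≤ K := by omega
      rw [zmod2_pow_self _ (K + 1) (by omega), zmod2_pow_self _ K hKpos]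
      ring
    exact (ZMod.intCast_eq_intCast_iff _ _ _).1 this
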